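/- For every constant C₁ > 0 there exists a constant C₂ > 0 such that the following holds. Let m ≥ 2, let τ > 0, and let S_1, …, S_m be random variables on a common probability space such that each S_i = Σ_{j=1}^{n_i} X_{ij} is a finite sum of mutually independent random variables X_{ij} taking values in the interval [0, τ], and E[S_i] ≤ C₁ · τ · log m for every i. Then E[max_{1 ≤ i ≤ m} S_i] ≤ C₂ · τ · log m. -/

import Mathlib

open MeasureTheory ProbabilityTheory Real

lemma integrable_of_mem_Icc {Ω : Type} [MeasureSpace Ω] [IsProbabilityMeasure (ℙ : Measure Ω)]
    {f : Ω → ℝ} (hf : Measurable f) {a b : ℝ} (h : ∀ ω, f ω ∈ Set.Icc a b) :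
    Integrable f := by
  refine (integrable_const (max |a| |b|)).mono' hf.aestronglyMeasurable (ae_of_all _ fun ω => ?_)
  rcases h ω with ⟨h1, h2⟩
  rw [Real.norm_eq_abs, abs_le]
  constructor
  · calc -(max |a| |b|) ≤ -|a| := neg_le_neg (le_max_left _ _)
      _ ≤ a := neg_abs_le a
      _ ≤ f ω := h1
  · exact h2.trans ((le_abs_self b).trans (le_max_right _ _))

lemma integral_log_le {Ω : Type} [MeasureSpace Ω] [IsProbabilityMeasure (ℙ : Measure Ω)]
    {Y : Ω → ℝ} (hInt : Integrable Y) (hIntLog : Integrable (fun ω => Real.log (Y ω)))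
    (hpos : ∀ ω, 0 < Y ω) (hc : 0 < ∫ ω, Y ω) :
    (∫ ω, Real.log (Y ω)) ≤ Real.log (∫ ω, Y ω) := by
  set c := ∫ ω, Y ω with hcdef
  have key : ∀ ω, Real.log (Y ω) ≤ Real.log c + (Y ω / c - 1) := by
    intro ω
    have h1 : Real.log (Y ω / c) ≤ Y ω / c - 1 :=
      Real.log_le_sub_one_of_pos (div_pos (hpos ω) hc)
    have h2 : Real.log (Y ω / c) = Real.log (Y ω) - Real.log c :=
      Real.log_div (hpos ω).ne' hc.ne'
    linarith
  have h1 : Integrable (fun ω => Y ω / c - 1) := (hInt.div_const c).sub (integrable_const 1)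
  have hRInt : Integrable (fun ω => Real.log c + (Y ω / c - 1)) := (integrable_const _).add h1
  calc (∫ ω, Real.log (Y ω)) ≤ ∫ ω, (Real.log c + (Y ω / c - 1)) :=
        integral_mono hIntLog hRInt key
    _ = Real.log c + ((∫ ω, Y ω) / c - 1) := by
        rw [integral_add (integrable_const _) h1, integral_const,
          integral_sub (hInt.div_const c) (integrable_const 1),
          integral_div, integral_const]
        simp
    _ = Real.log c := by
        rw [← hcdef, div_self hc.ne']
        ring

lemma exp_le_of_Icc {x τ : ℝ} (hτ : 0 < τ) (hx : x ∈ Set.Icc (0:ℝ) τ) :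
    Real.exp (τ⁻¹ * x) ≤ 1 + (Real.exp 1 - 1) * (x / τ) := by
  set u := x / τ with hu
  have hu0 : 0 ≤ u := div_nonneg hx.1 hτ.le
  have hu1 : u ≤ 1 := (div_le_one hτ).2 hx.2
  have h := convexOn_exp.2 (Set.mem_univ (0:ℝ)) (Set.mem_univ (1:ℝ))
    (by linarith : (0:ℝ) ≤ 1 - u) hu0 (by ring)
  simp only [smul_eq_mul, mul_zero, mul_one, zero_add, Real.exp_zero] at h
  have : τ⁻¹ * x = u := by rw [hu]; ring
  rw [this]
  calc Real.exp u ≤ (1 - u) * 1 + u * Real.exp 1 := by simpa using h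
    _ = 1 + (Real.exp 1 - 1) * u := by ring

/-- For every constant `C₁ > 0` there is a constant `C₂ > 0` such that: for `m ≥ 2`,
`τ > 0`, and random variables `S i = ∑ j, X i j` (each a finite sum of mutually
independent random variables with values in `[0, τ]`) with `E[S i] ≤ C₁ · τ · log m`
for every `i`, we have `E[max_i S i] ≤ C₂ · τ · log m`. -/
theorem stmt1 :
    ∀ C₁ : ℝ, 0 < C₁ →
      ∃ C₂ : ℝ, 0 < C₂ ∧
        ∀ (Ω : Type) [MeasureSpace Ω] [IsProbabilityMeasure (ℙ : Measure Ω)]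
          (m : ℕ), 2 ≤ m →
          ∀ (τ : ℝ), 0 < τ →
          ∀ (n : Fin m → ℕ) (X : (i : Fin m) → Fin (n i) → Ω → ℝ),
            (∀ i j, Measurable (X i j)) →
            (∀ i, iIndepFun (X i) ℙ) →
            (∀ i j ω, X i j ω ∈ Set.Icc (0 : ℝ) τ) →
            (∀ i, (∫ ω, ∑ j, X i j ω) ≤ C₁ * τ * Real.log m) →
            (∫ ω, ⨆ i, ∑ j, X i j ω) ≤ C₂ * τ * Real.log m := by
  intro C₁ hC₁
  refine ⟨1 + 2 * C₁, by linarith, ?_⟩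
  intro Ω _ _ m hm τ hτ n X hmeas hindep hbdd hmean
  have : NeZero m := ⟨by omega⟩
  have hm0 : (0:ℝ) < m := by positivity
  have hm1 : (1:ℝ) < m := by exact_mod_cast (by omega : 1 < m)
  have hlogm : 0 < Real.log m := Real.log_pos hm1
  set S : Fin m → Ω → ℝ := fun i ω => ∑ j, X i j ω with hSdef
  have hSmeas : ∀ i, Measurable (S i) := fun i => Finset.measurable_sum _ fun j _ => hmeas i j
  have hSnn : ∀ i ω, 0 ≤ S i ω := fun i ω => Finset.sum_nonneg fun j _ => (hbdd i j ω).1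
  -- uniform bound on n
  set K : ℕ := Finset.univ.sup n with hKdef
  have hSle : ∀ i ω, S i ω ≤ K * τ := by
    intro i ω
    calc S i ω ≤ ∑ _j : Fin (n i), τ := Finset.sum_le_sum fun j _ => (hbdd i j ω).2
      _ = (n i : ℝ) * τ := by simp [mul_comm]
      _ ≤ (K : ℝ) * τ := by
          have h : (n i : ℝ) ≤ (K : ℝ) := by exact_mod_cast Finset.le_sup (Finset.mem_univ i)
          nlinarith
  set Y : Ω → ℝ := fun ω => ∑ i, Real.exp (τ⁻¹ * S i ω) with hYdef
  have hYmeas : Measurable Y :=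
    Finset.measurable_sum _ fun i _ => ((hSmeas i).const_mul _).exp
  have hterm : ∀ i ω, Real.exp (τ⁻¹ * S i ω) ≤ Real.exp (K:ℝ) := by
    intro i ω
    refine Real.exp_le_exp.2 ?_
    have h1 : 0 ≤ τ⁻¹ := by positivity
    have h2 : τ⁻¹ * S i ω ≤ τ⁻¹ * ((K:ℝ) * τ) := by nlinarith [hSle i ω]
    calc τ⁻¹ * S i ω ≤ τ⁻¹ * ((K:ℝ) * τ) := h2
      _ = (K : ℝ) := by field_simp
  have hYicc : ∀ ω, Y ω ∈ Set.Icc (m : ℝ) ((m : ℝ) * Real.exp K) := by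
    intro ω
    constructor
    · calc (m : ℝ) = ∑ _i : Fin m, (1:ℝ) := by simp
        _ ≤ Y ω := Finset.sum_le_sum fun i _ =>
            Real.one_le_exp (mul_nonneg (by positivity) (hSnn i ω))
    · calc Y ω ≤ ∑ _i : Fin m, Real.exp (K:ℝ) := Finset.sum_le_sum fun i _ => hterm i ω
        _ = (m : ℝ) * Real.exp (K:ℝ) := by simp [mul_comm]
  have hYpos : ∀ ω, 0 < Y ω := fun ω => lt_of_lt_of_le hm0 (hYicc ω).1
  have hYint : Integrable Y := integrable_of_mem_Icc hYmeas hYicc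
  have hlogYint : Integrable (fun ω => Real.log (Y ω)) := by
    refine integrable_of_mem_Icc hYmeas.log (a := Real.log m)
      (b := Real.log ((m : ℝ) * Real.exp K)) fun ω => ?_
    exact ⟨Real.log_le_log hm0 (hYicc ω).1, Real.log_le_log (hYpos ω) (hYicc ω).2⟩
  have hcY : 0 < ∫ ω, Y ω := by
    have h := integral_mono (integrable_const (m:ℝ)) hYint fun ω => (hYicc ω).1
    rw [integral_const] at h
    simp at h
    linarith
  -- pointwise sup bound
  have hsup : ∀ ω, (⨆ i, S i ω) ≤ τ * Real.log (Y ω) := by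
    intro ω
    refine ciSup_le fun i => ?_
    have h1 : Real.exp (τ⁻¹ * S i ω) ≤ Y ω :=
      Finset.single_le_sum (f := fun i => Real.exp (τ⁻¹ * S i ω))
        (fun j _ => (Real.exp_pos _).le) (Finset.mem_univ i)
    have h2 : τ⁻¹ * S i ω ≤ Real.log (Y ω) :=
      (Real.le_log_iff_exp_le (hYpos ω)).2 h1
    calc S i ω = τ * (τ⁻¹ * S i ω) := by field_simp
      _ ≤ τ * Real.log (Y ω) := by gcongr
  -- integrability of the sup
  have hMmeas : Measurable (fun ω => ⨆ i, S i ω) := Measurable.iSup hSmeas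
  have hMint : Integrable (fun ω => ⨆ i, S i ω) := by
    refine integrable_of_mem_Icc hMmeas (a := 0) (b := (K:ℝ) * τ) fun ω => ?_
    exact ⟨le_ciSup_of_le (Set.Finite.bddAbove (Set.finite_range _)) ⟨0, by omega⟩ (hSnn _ ω),
      ciSup_le fun i => hSle i ω⟩
  -- mgf bound for each i
  have hXint : ∀ i j, Integrable (X i j) := fun i j =>
    integrable_of_mem_Icc (hmeas i j) (hbdd i j)
  have hXnn : ∀ i j, 0 ≤ ∫ ω, X i j ω := fun i j =>
    integral_nonneg fun ω => (hbdd i j ω).1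
  have hexp1 : Real.exp 1 - 1 ≤ 2 := by
    have := Real.exp_one_lt_d9
    linarith
  have hmgf_factor : ∀ i j, mgf (X i j) ℙ τ⁻¹ ≤ Real.exp ((Real.exp 1 - 1) / τ * ∫ ω, X i j ω) := by
    intro i j
    have hIntRHS : Integrable (fun ω => 1 + (Real.exp 1 - 1) * (X i j ω / τ)) :=
      (integrable_const 1).add (((hXint i j).div_const τ).const_mul _)
    calc mgf (X i j) ℙ τ⁻¹ = ∫ ω, Real.exp (τ⁻¹ * X i j ω) := rfl
      _ ≤ ∫ ω, (1 + (Real.exp 1 - 1) * (X i j ω / τ)) := by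
          refine integral_mono ?_ hIntRHS fun ω => exp_le_of_Icc hτ (hbdd i j ω)
          refine integrable_of_mem_Icc ((hmeas i j).const_mul _).exp
            (a := 0) (b := Real.exp 1) fun ω => ?_
          constructor
          · exact (Real.exp_pos _).le
          · refine Real.exp_le_exp.2 ?_
            have := (hbdd i j ω).2
            have h1 : 0 ≤ τ⁻¹ := by positivity
            have : τ⁻¹ * X i j ω ≤ τ⁻¹ * τ := by nlinarith
            rwa [inv_mul_cancel₀ hτ.ne'] at this
      _ = 1 + (Real.exp 1 - 1) / τ * ∫ ω, X i j ω := by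
          rw [integral_add (integrable_const 1) (((hXint i j).div_const τ).const_mul _),
            integral_const, integral_const_mul, integral_div]
          simp
          ring
      _ ≤ Real.exp ((Real.exp 1 - 1) / τ * ∫ ω, X i j ω) := by
          have := Real.add_one_le_exp ((Real.exp 1 - 1) / τ * ∫ ω, X i j ω)
          linarith
  have hmgf_i : ∀ i, mgf (∑ j, X i j) ℙ τ⁻¹ ≤ (m:ℝ) ^ (2 * C₁ : ℝ) := by
    intro i
    rw [(hindep i).mgf_sum (hmeas i) Finset.univ]
    calc (∏ j, mgf (X i j) ℙ τ⁻¹)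
        ≤ ∏ j, Real.exp ((Real.exp 1 - 1) / τ * ∫ ω, X i j ω) :=
          Finset.prod_le_prod (fun j _ => mgf_nonneg) (fun j _ => hmgf_factor i j)
      _ = Real.exp (∑ j, (Real.exp 1 - 1) / τ * ∫ ω, X i j ω) := by rw [Real.exp_sum]
      _ = Real.exp ((Real.exp 1 - 1) / τ * ∫ ω, S i ω) := by
          rw [← Finset.mul_sum, hSdef]
          congr 2
          rw [integral_finset_sum _ fun j _ => hXint i j]
      _ ≤ Real.exp (2 * C₁ * Real.log m) := by
          refine Real.exp_le_exp.2 ?_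
          have hSnn' : 0 ≤ ∫ ω, S i ω := integral_nonneg fun ω => hSnn i ω
          have hE : (∫ ω, S i ω) ≤ C₁ * τ * Real.log m := hmean i
          have h1 : 0 ≤ (Real.exp 1 - 1) / τ := by
            have h0 : (1:ℝ) ≤ Real.exp 1 := Real.one_le_exp zero_le_one
            exact div_nonneg (by linarith) hτ.le
          calc (Real.exp 1 - 1) / τ * ∫ ω, S i ω
              ≤ (Real.exp 1 - 1) / τ * (C₁ * τ * Real.log m) := by gcongr
            _ = (Real.exp 1 - 1) * C₁ * Real.log m := by field_simp
            _ ≤ 2 * C₁ * Real.log m := by nlinarith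
      _ = (m:ℝ) ^ (2 * C₁ : ℝ) := by
          rw [Real.rpow_def_of_pos hm0]
          ring_nf
  -- integral of Y
  have hYeq : (∫ ω, Y ω) = ∑ i, mgf (∑ j, X i j) ℙ τ⁻¹ := by
    rw [hYdef, integral_finset_sum]
    · refine Finset.sum_congr rfl fun i _ => ?_
      rw [mgf]
      congr 1
      ext ω
      rw [hSdef]
      simp
    · intro i _
      exact integrable_of_mem_Icc ((hSmeas i).const_mul _).exp
        (a := 0) (b := Real.exp (K:ℝ)) fun ω => ⟨(Real.exp_pos _).le, hterm i ω⟩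
  have hYle : (∫ ω, Y ω) ≤ (m:ℝ) * (m:ℝ) ^ (2 * C₁ : ℝ) := by
    rw [hYeq]
    calc (∑ i, mgf (∑ j, X i j) ℙ τ⁻¹) ≤ ∑ _i : Fin m, (m:ℝ) ^ (2 * C₁ : ℝ) :=
        Finset.sum_le_sum fun i _ => hmgf_i i
      _ = (m:ℝ) * (m:ℝ) ^ (2 * C₁ : ℝ) := by simp [mul_comm]
  -- final chain
  calc (∫ ω, ⨆ i, ∑ j, X i j ω) = ∫ ω, ⨆ i, S i ω := rfl
    _ ≤ ∫ ω, τ * Real.log (Y ω) := integral_mono hMint (hlogYint.const_mul τ) hsup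
    _ = τ * ∫ ω, Real.log (Y ω) := integral_const_mul τ _
    _ ≤ τ * Real.log (∫ ω, Y ω) := by
        have := integral_log_le hYint hlogYint hYpos hcY
        nlinarith
    _ ≤ τ * Real.log ((m:ℝ) * (m:ℝ) ^ (2 * C₁ : ℝ)) := by
        have := Real.log_le_log hcY hYle
        nlinarith
    _ = τ * (Real.log m + 2 * C₁ * Real.log m) := by
        rw [Real.log_mul hm0.ne' (by positivity), Real.log_rpow hm0]
    _ = (1 + 2 * C₁) * τ * Real.log m := by ring
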